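/- Let G ∈ C³(ℝⁿ; ℝⁿ), let μ be a finite signed Borel measure on ℝ with μ(ℝ) = 0 and ∫ |y|³ |μ|(dy) < ∞, let ε > 0, and let u : ℝ → ℝⁿ be bounded and continuous. For y ≠ 0 set D̂_{εy}u(x) = (u(x+εy) − u(x))/(εy) and let (D_ε v)(x) = ε^{−1} ∫_ℝ v(x+εy) μ(dy). Then for every x ∈ ℝ the following identity holds: D_ε(G∘u)(x) = ∇G(u(x)) D_ε u(x) + ∫_ℝ (εy²/2) D²G(u(x))[D̂_{εy}u(x), D̂_{εy}u(x)] μ(dy) + ∫_ℝ ε² y³ ∫₀¹ ∫₀ᵗ ∫₀ˢ D³G( (1−r) u(x) + r u(x+εy) ) [D̂_{εy}u(x), D̂_{εy}u(x), D̂_{εy}u(x)] dr ds dt μ(dy), where the integrands are interpreted as 0 at y = 0 and all integrals converge absolutely. -/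

import Mathlib

open MeasureTheory intervalIntegral

variable {E F : Type*} [NormedAddCommGroup E] [NormedSpace ℝ E]
  [NormedAddCommGroup F] [NormedSpace ℝ F] [CompleteSpace F]

lemma taylor3 {G : E → F} (hG : ContDiff ℝ 3 G) (a h : E) :
    G (a + h) = G a + fderiv ℝ G a h
      + (2 : ℝ)⁻¹ • iteratedFDeriv ℝ 2 G a (fun _ => h)
      + ∫ t in (0:ℝ)..1, ∫ s in (0:ℝ)..t, ∫ r in (0:ℝ)..s,
          iteratedFDeriv ℝ 3 G (a + r • h) (fun _ => h) := by
  set fk : ℕ → ℝ → F := fun k t => iteratedFDeriv ℝ k G (a + t • h) (fun _ => h) with hfk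
  have hcurve : ∀ t : ℝ, HasDerivAt (fun t : ℝ => a + t • h) h t := fun t => by
    simpa using ((hasDerivAt_id t).smul_const h).const_add a
  have hasD : ∀ k : ℕ, k < 3 → ∀ t : ℝ, HasDerivAt (fk k) (fk (k+1) t) t := by
    intro k hk t
    have hdiff := hG.differentiable_iteratedFDeriv (n := 3) (m := k) (by exact_mod_cast hk)
    have h2 := ((hdiff _).hasFDerivAt).comp_hasDerivAt t (hcurve t)
    have h3 := ((ContinuousMultilinearMap.apply ℝ (fun _ : Fin k => E) F
      (fun _ => h)).hasFDerivAt).comp_hasDerivAt t h2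
    convert h3 using 1
    show iteratedFDeriv ℝ (k+1) G (a + t • h) (fun _ => h) = _
    rw [iteratedFDeriv_succ_apply_left]
    rfl
    rfl
  have cont : ∀ k : ℕ, k ≤ 3 → Continuous (fk k) := by
    intro k hk
    exact (ContinuousMultilinearMap.apply ℝ (fun _ : Fin k => E) F
      (fun _ => h)).continuous.comp
      ((hG.continuous_iteratedFDeriv (by exact_mod_cast hk)).comp
        (by continuity))
  have ftc : ∀ k : ℕ, k < 3 → ∀ t : ℝ,
      ∫ s in (0:ℝ)..t, fk (k+1) s = fk k t - fk k 0 := fun k hk t =>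
    intervalIntegral.integral_eq_sub_of_hasDerivAt (fun s _ => hasD k hk s)
      ((cont (k+1) hk).intervalIntegrable _ _)
  have e2 : ∀ s : ℝ, fk 2 s = fk 2 0 + ∫ r in (0:ℝ)..s, fk 3 r := fun s => by
    rw [ftc 2 (by norm_num) s]; abel
  have e1 : ∀ t : ℝ, fk 1 t = fk 1 0 + ∫ s in (0:ℝ)..t, fk 2 s := fun t => by
    rw [ftc 1 (by norm_num) t]; abel
  have e0 : G (a + h) = G a + ∫ t in (0:ℝ)..1, fk 1 t := by
    have hd : ∀ t : ℝ, HasDerivAt (fun t : ℝ => G (a + t • h)) (fk 1 t) t := by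
      intro t
      have := ((hG.differentiable (by norm_num) _).hasFDerivAt).comp_hasDerivAt t (hcurve t)
      convert this using 1
      show iteratedFDeriv ℝ 1 G (a + t • h) (fun _ => h) = _
      rw [iteratedFDeriv_one_apply]
      rfl
    have := intervalIntegral.integral_eq_sub_of_hasDerivAt (fun t (_ : t ∈ _) => hd t)
      ((cont 1 (by norm_num)).intervalIntegrable 0 1)
    simp only [one_smul, zero_smul, add_zero] at this
    rw [this]; abel
  -- primitives are continuous
  have cprim3 : Continuous fun s : ℝ => ∫ r in (0:ℝ)..s, fk 3 r :=
    intervalIntegral.continuous_primitive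
      (fun a b => (cont 3 le_rfl).intervalIntegrable a b) 0
  have hfk2 : ∀ t : ℝ, (∫ s in (0:ℝ)..t, fk 2 s)
      = t • fk 2 0 + ∫ s in (0:ℝ)..t, ∫ r in (0:ℝ)..s, fk 3 r := by
    intro t
    calc ∫ s in (0:ℝ)..t, fk 2 s
        = ∫ s in (0:ℝ)..t, (fk 2 0 + ∫ r in (0:ℝ)..s, fk 3 r) := by
          simp only [← e2]
      _ = (∫ s in (0:ℝ)..t, fk 2 0) + ∫ s in (0:ℝ)..t, ∫ r in (0:ℝ)..s, fk 3 r := by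
          rw [intervalIntegral.integral_add (intervalIntegrable_const)
            (cprim3.intervalIntegrable _ _)]
      _ = t • fk 2 0 + _ := by rw [intervalIntegral.integral_const]; simp
  have cprim2 : Continuous fun t : ℝ => ∫ s in (0:ℝ)..t, ∫ r in (0:ℝ)..s, fk 3 r :=
    intervalIntegral.continuous_primitive
      (fun a b => cprim3.intervalIntegrable a b) 0
  have main : ∫ t in (0:ℝ)..1, fk 1 t
      = fk 1 0 + (2:ℝ)⁻¹ • fk 2 0
        + ∫ t in (0:ℝ)..1, ∫ s in (0:ℝ)..t, ∫ r in (0:ℝ)..s, fk 3 r := by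
    calc ∫ t in (0:ℝ)..1, fk 1 t
        = ∫ t in (0:ℝ)..1, (fk 1 0 + (t • fk 2 0
            + ∫ s in (0:ℝ)..t, ∫ r in (0:ℝ)..s, fk 3 r)) := by
          refine intervalIntegral.integral_congr fun t _ => ?_
          rw [e1 t, hfk2 t]
      _ = (∫ t in (0:ℝ)..1, fk 1 0) + ∫ t in (0:ℝ)..1, (t • fk 2 0
            + ∫ s in (0:ℝ)..t, ∫ r in (0:ℝ)..s, fk 3 r) := by
          have ic : IntervalIntegrable (fun t : ℝ => t • fk 2 0
              + ∫ s in (0:ℝ)..t, ∫ r in (0:ℝ)..s, fk 3 r) volume 0 1 := by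
            apply Continuous.intervalIntegrable
            exact (continuous_id.smul continuous_const).add cprim2
          rw [intervalIntegral.integral_add intervalIntegrable_const ic]
      _ = fk 1 0 + ((∫ t in (0:ℝ)..1, t • fk 2 0)
            + ∫ t in (0:ℝ)..1, ∫ s in (0:ℝ)..t, ∫ r in (0:ℝ)..s, fk 3 r) := by
          have ic : IntervalIntegrable (fun t : ℝ => t • fk 2 0) volume 0 1 := by
            apply Continuous.intervalIntegrable
            exact continuous_id.smul continuous_const
          rw [intervalIntegral.integral_add ic (cprim2.intervalIntegrable _ _)]
          simp
      _ = _ := by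
          rw [intervalIntegral.integral_smul_const, integral_id]
          norm_num [add_assoc]
  have hfd : fderiv ℝ G a h = fk 1 0 := by
    simp only [hfk, zero_smul, add_zero, iteratedFDeriv_one_apply]
  rw [e0, main, hfd]
  simp only [hfk, zero_smul, add_zero]
  abel




open MeasureTheory
open scoped Matrix

/-- Integral of a vector-valued function against the signed measure `μ = μp - μn`. -/
noncomputable def sInt {n : ℕ} (μp μn : Measure ℝ) (F : ℝ → EuclideanSpace ℝ (Fin n)) :
    EuclideanSpace ℝ (Fin n) :=
  (∫ y, F y ∂μp) - ∫ y, F y ∂μn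

/-- The approximate derivative `(D_ε v)(x) = ε^{-1} ∫ v(x+εy) μ(dy)`. -/
noncomputable def Deps {n : ℕ} (μp μn : Measure ℝ) (ε : ℝ)
    (v : ℝ → EuclideanSpace ℝ (Fin n)) (x : ℝ) : EuclideanSpace ℝ (Fin n) :=
  ε⁻¹ • sInt μp μn fun y => v (x + ε * y)

/-- The difference quotient `D̂_ζ u(x) = (u(x+ζ) - u(x))/ζ`. -/
noncomputable def Dhat {n : ℕ} (ζ : ℝ) (u : ℝ → EuclideanSpace ℝ (Fin n)) (x : ℝ) :
    EuclideanSpace ℝ (Fin n) :=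
  ζ⁻¹ • (u (x + ζ) - u x)

/-- The quadratic Taylor term
`y ↦ (εy²/2) D²G(u(x))[D̂_{εy}u(x), D̂_{εy}u(x)]`. -/
noncomputable def quadTerm {n : ℕ} (G : EuclideanSpace ℝ (Fin n) → EuclideanSpace ℝ (Fin n))
    (ε : ℝ) (u : ℝ → EuclideanSpace ℝ (Fin n)) (x y : ℝ) : EuclideanSpace ℝ (Fin n) :=
  (ε * y ^ 2 / 2) •
    iteratedFDeriv ℝ 2 G (u x) ![Dhat (ε * y) u x, Dhat (ε * y) u x]

/-- The cubic Taylor remainder term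
`y ↦ ε²y³ ∫₀¹∫₀ᵗ∫₀ˢ D³G((1-r)u(x) + r u(x+εy))[D̂_{εy}u(x)]³ dr ds dt`. -/
noncomputable def cubTerm {n : ℕ} (G : EuclideanSpace ℝ (Fin n) → EuclideanSpace ℝ (Fin n))
    (ε : ℝ) (u : ℝ → EuclideanSpace ℝ (Fin n)) (x y : ℝ) : EuclideanSpace ℝ (Fin n) :=
  (ε ^ 2 * y ^ 3) •
    ∫ t in (0 : ℝ)..1, ∫ s in (0 : ℝ)..t, ∫ r in (0 : ℝ)..s,
      iteratedFDeriv ℝ 3 G ((1 - r) • u x + r • u (x + ε * y))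
        ![Dhat (ε * y) u x, Dhat (ε * y) u x, Dhat (ε * y) u x]


open scoped Matrix in
lemma pointwise {n : ℕ} (G : EuclideanSpace ℝ (Fin n) → EuclideanSpace ℝ (Fin n))
    (hG : ContDiff ℝ 3 G) (ε : ℝ) (hε : ε ≠ 0)
    (u : ℝ → EuclideanSpace ℝ (Fin n)) (x y : ℝ) :
    G (u (x + ε * y)) = G (u x) + fderiv ℝ G (u x) (u (x + ε * y) - u x)
      + ε • quadTerm G ε u x y + ε • cubTerm G ε u x y := by
  by_cases hy : y = 0
  · subst hy
    simp [quadTerm, cubTerm, mul_zero, add_zero, sub_self, map_zero]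
  · have hζ0 : ε * y ≠ 0 := mul_ne_zero hε hy
    set ζ := ε * y with hζ
    set a := u x with ha
    set b := u (x + ζ) with hbdef
    set v := Dhat ζ u x with hv
    have hbv : b - a = ζ • v := by
      rw [hv, Dhat, smul_inv_smul₀ hζ0]
    have htay := taylor3 hG a (b - a)
    rw [add_sub_cancel] at htay
    have hvec2 : (fun _ : Fin 2 => v) = ![v, v] := by
      funext i; fin_cases i <;> rfl
    have hvec3 : (fun _ : Fin 3 => v) = ![v, v, v] := by
      funext i; fin_cases i <;> rfl
    have h2 : iteratedFDeriv ℝ 2 G a (fun _ => b - a)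
        = (ζ ^ 2) • iteratedFDeriv ℝ 2 G a ![v, v] := by
      have := (iteratedFDeriv ℝ 2 G a).map_smul_univ (fun _ => ζ) (fun _ => v)
      simp only [Finset.prod_const, Finset.card_univ, Fintype.card_fin] at this
      rw [hbv]
      rw [show (fun _ : Fin 2 => ζ • v) = (fun i : Fin 2 => (fun _ : Fin 2 => ζ) i • (fun _ : Fin 2 => v) i) from rfl, this, hvec2]
    have h3 : ∀ r : ℝ, iteratedFDeriv ℝ 3 G (a + r • (b - a)) (fun _ => b - a)
        = (ζ ^ 3) • iteratedFDeriv ℝ 3 G ((1 - r) • a + r • b) ![v, v, v] := by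
      intro r
      have hpt : a + r • (b - a) = (1 - r) • a + r • b := by module
      have := (iteratedFDeriv ℝ 3 G ((1 - r) • a + r • b)).map_smul_univ
        (fun _ => ζ) (fun _ => v)
      simp only [Finset.prod_const, Finset.card_univ, Fintype.card_fin] at this
      rw [hpt, hbv]
      rw [show (fun _ : Fin 3 => ζ • v) = (fun i : Fin 3 => (fun _ : Fin 3 => ζ) i • (fun _ : Fin 3 => v) i) from rfl, this, hvec3]
    simp only [h2, h3, intervalIntegral.integral_smul] at htay
    rw [htay, quadTerm, cubTerm]
    simp only [← hζ, ← ha, ← hbdef, ← hv, smul_smul]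
    congr 2
    · simp only [hζ]; congr 1; ring
    · ring

lemma integrable_of_bdd {E : Type*} [NormedAddCommGroup E]
    {ν : MeasureTheory.Measure ℝ} [MeasureTheory.IsFiniteMeasure ν] {f : ℝ → E}
    (hf : MeasureTheory.AEStronglyMeasurable f ν) {C : ℝ} (hC : ∀ y, ‖f y‖ ≤ C) :
    MeasureTheory.Integrable f ν :=
  (MeasureTheory.integrable_const C).mono' hf (Filter.Eventually.of_forall hC)

lemma expand_integral {n : ℕ} (G : EuclideanSpace ℝ (Fin n) → EuclideanSpace ℝ (Fin n))
    (hG : ContDiff ℝ 3 G) (ε : ℝ) (hε : ε ≠ 0) (u : ℝ → EuclideanSpace ℝ (Fin n)) (x : ℝ)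
    (ν : Measure ℝ) [IsFiniteMeasure ν]
    (hg : Integrable (fun y => u (x + ε * y)) ν)
    (hGi : Integrable (fun y => G (u (x + ε * y))) ν)
    (hq : Integrable (quadTerm G ε u x) ν)
    (hc : Integrable (cubTerm G ε u x) ν) :
    ∫ y, G (u (x + ε * y)) ∂ν
      = (ν Set.univ).toReal • G (u x)
        + ((fderiv ℝ G (u x)) (∫ y, u (x + ε * y) ∂ν)
            - (ν Set.univ).toReal • (fderiv ℝ G (u x)) (u x))
        + ε • ∫ y, quadTerm G ε u x y ∂ν + ε • ∫ y, cubTerm G ε u x y ∂ν := by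
  set L := fderiv ℝ G (u x) with hL
  have hLg : Integrable (fun y => L (u (x + ε * y))) ν := L.integrable_comp hg
  have hLs : Integrable (fun y => L (u (x + ε * y)) - L (u x)) ν :=
    hLg.sub (integrable_const _)
  calc ∫ y, G (u (x + ε * y)) ∂ν
      = ∫ y, (G (u x) + (L (u (x + ε * y)) - L (u x))
          + ε • quadTerm G ε u x y + ε • cubTerm G ε u x y) ∂ν := by
        refine integral_congr_ae (Filter.Eventually.of_forall fun y => ?_)
        show G (u (x + ε * y)) = G (u x) + (L (u (x + ε * y)) - L (u x))
          + ε • quadTerm G ε u x y + ε • cubTerm G ε u x y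
        rw [pointwise G hG ε hε u x y, ← hL, map_sub]
    _ = _ := by
        have hq' : Integrable (fun y => ε • quadTerm G ε u x y) ν := hq.smul ε
        have hc' : Integrable (fun y => ε • cubTerm G ε u x y) ν := hc.smul ε
        have hconst : Integrable (fun _ : ℝ => G (u x)) ν := integrable_const _
        have h12 : Integrable (fun y => G (u x) + (L (u (x + ε * y)) - L (u x))) ν :=
          hconst.add hLs
        have h123 : Integrable (fun y => G (u x) + (L (u (x + ε * y)) - L (u x))
            + ε • quadTerm G ε u x y) ν := h12.add hq'
        rw [integral_add h123 hc',
          integral_add h12 hq',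
          integral_add hconst hLs,
          integral_sub hLg (integrable_const _),
          L.integral_comp_comm hg,
          MeasureTheory.integral_const, MeasureTheory.integral_const,
          MeasureTheory.integral_smul, MeasureTheory.integral_smul]
        rfl

/-- Exact Taylor expansion of `D_ε(G∘u)`, replacing the chain rule for the approximate
derivative `D_ε`: all integrals converge absolutely and
`D_ε(G∘u)(x) = ∇G(u(x)) D_ε u(x) + ∫ quad μ(dy) + ∫ cubic μ(dy)`. -/
theorem stmt_18 (n : ℕ) (G : EuclideanSpace ℝ (Fin n) → EuclideanSpace ℝ (Fin n))
    (hG : ContDiff ℝ 3 G)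
    (μp μn : Measure ℝ) [IsFiniteMeasure μp] [IsFiniteMeasure μn]
    (hzero : μp Set.univ = μn Set.univ)
    (hmom : Integrable (fun y : ℝ => |y| ^ 3) (μp + μn))
    (ε : ℝ) (hε : 0 < ε)
    (u : ℝ → EuclideanSpace ℝ (Fin n)) (hu : Continuous u)
    (hb : ∃ M, ∀ x, ‖u x‖ ≤ M) (x : ℝ) :
    (Integrable (quadTerm G ε u x) μp ∧ Integrable (quadTerm G ε u x) μn ∧
      Integrable (cubTerm G ε u x) μp ∧ Integrable (cubTerm G ε u x) μn) ∧
    Deps μp μn ε (fun z => G (u z)) x =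
      fderiv ℝ G (u x) (Deps μp μn ε u x) +
        sInt μp μn (quadTerm G ε u x) + sInt μp μn (cubTerm G ε u x) := by
  classical
  obtain ⟨M₀, hM₀⟩ := hb
  set M := max M₀ 0 with hMdef
  have hM : ∀ z, ‖u z‖ ≤ M := fun z => (hM₀ z).trans (le_max_left _ _)
  have hMnn : (0:ℝ) ≤ M := le_max_right _ _
  have hεne : ε ≠ 0 := ne_of_gt hε
  -- difference quotient bound
  have hdb : ∀ ζ : ℝ, ‖Dhat ζ u x‖ ≤ |ζ|⁻¹ * (2 * M) := by
    intro ζ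
    rw [Dhat, norm_smul, norm_inv, Real.norm_eq_abs]
    have h2M : ‖u (x + ζ) - u x‖ ≤ 2 * M := by
      refine (norm_sub_le _ _).trans ?_
      have := hM (x + ζ); have := hM x; linarith
    exact mul_le_mul_of_nonneg_left h2M (by positivity)
  -- measurability of Dhat and quadTerm
  have hDmeas : Measurable fun y : ℝ => Dhat (ε * y) u x := by
    refine Measurable.smul (f := fun y : ℝ => (ε * y)⁻¹) (g := fun y => u (x + ε * y) - u x) ?_ ?_
    · exact (measurable_const.mul measurable_id).inv
    · exact ((hu.comp (continuous_const.add (continuous_const.mul continuous_id))).sub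
        continuous_const).measurable
  have hBcont : Continuous fun v : EuclideanSpace ℝ (Fin n) =>
      iteratedFDeriv ℝ 2 G (u x) ![v, v] := by
    refine (iteratedFDeriv ℝ 2 G (u x)).cont.comp ?_
    refine continuous_pi fun i => ?_
    fin_cases i <;> exact continuous_id
  have hqmeas : Measurable (quadTerm G ε u x) := by
    refine Measurable.smul (f := fun y : ℝ => ε * y ^ 2 / 2)
      (g := fun y => iteratedFDeriv ℝ 2 G (u x) ![Dhat (ε * y) u x, Dhat (ε * y) u x]) ?_ ?_
    · exact measurable_const.mul ((measurable_id.pow_const 2)) |>.div measurable_const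
    · exact hBcont.measurable.comp hDmeas
  -- bound on quadTerm
  set C2 := ‖iteratedFDeriv ℝ 2 G (u x)‖ with hC2
  have hC2nn : 0 ≤ C2 := norm_nonneg _
  have hqbd : ∀ y, ‖quadTerm G ε u x y‖ ≤ 2 * C2 * M ^ 2 / ε := by
    intro y
    by_cases hy : y = 0
    · subst hy
      simp only [quadTerm, mul_zero, ne_eq, OfNat.ofNat_ne_zero, not_false_eq_true,
        zero_pow, zero_div, zero_smul, norm_zero]
      positivity
    · rw [quadTerm, norm_smul, Real.norm_eq_abs]
      have h1 : ‖iteratedFDeriv ℝ 2 G (u x) ![Dhat (ε*y) u x, Dhat (ε*y) u x]‖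
          ≤ C2 * ((|ε * y|⁻¹ * (2 * M)) * (|ε * y|⁻¹ * (2 * M))) := by
        refine ((iteratedFDeriv ℝ 2 G (u x)).le_opNorm _).trans ?_
        rw [Fin.prod_univ_two]
        simp only [Matrix.cons_val_zero, Matrix.cons_val_one, Matrix.head_cons]
        have hvb := hdb (ε * y)
        exact mul_le_mul_of_nonneg_left
          (mul_le_mul hvb hvb (norm_nonneg _) (by positivity)) hC2nn
      calc |ε * y ^ 2 / 2| * ‖iteratedFDeriv ℝ 2 G (u x) ![Dhat (ε*y) u x, Dhat (ε*y) u x]‖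
          ≤ |ε * y ^ 2 / 2| * (C2 * ((|ε * y|⁻¹ * (2 * M)) * (|ε * y|⁻¹ * (2 * M)))) := by
            gcongr
        _ = 2 * C2 * M ^ 2 / ε := by
            rw [abs_of_nonneg (by positivity), abs_mul, abs_of_pos hε]
            have hy' : |y| ≠ 0 := fun h => hy (abs_eq_zero.mp h)
            have hyy : |y| * |y| = y ^ 2 := by rw [← abs_mul, ← sq, abs_of_nonneg (sq_nonneg y)]
            field_simp
            ring_nf
            rw [← hyy]
            ring
    -- end quad bound
  have hqintp : Integrable (quadTerm G ε u x) μp :=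
    integrable_of_bdd hqmeas.aestronglyMeasurable hqbd
  have hqintn : Integrable (quadTerm G ε u x) μn :=
    integrable_of_bdd hqmeas.aestronglyMeasurable hqbd
  -- G bounded on relevant set
  obtain ⟨CG, hCG⟩ : ∃ CG, ∀ z : EuclideanSpace ℝ (Fin n), ‖z‖ ≤ M → ‖G z‖ ≤ CG := by
    obtain ⟨C, hC⟩ := (isCompact_closedBall (0 : EuclideanSpace ℝ (Fin n)) M).exists_bound_of_continuousOn
      hG.continuous.continuousOn
    exact ⟨C, fun z hz => hC z (mem_closedBall_zero_iff.mpr hz)⟩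
  set L := fderiv ℝ G (u x) with hLdef
  -- continuity and integrability of the basic pieces
  have hgc : Continuous fun y : ℝ => u (x + ε * y) :=
    hu.comp (continuous_const.add (continuous_const.mul continuous_id))
  have hgb : ∀ y, ‖u (x + ε * y)‖ ≤ M := fun y => hM _
  have hGc : Continuous fun y : ℝ => G (u (x + ε * y)) := hG.continuous.comp hgc
  have hGb' : ∀ y, ‖G (u (x + ε * y))‖ ≤ CG := fun y => hCG _ (hgb y)
  have hgintp : Integrable (fun y => u (x + ε * y)) μp :=
    integrable_of_bdd hgc.aestronglyMeasurable hgb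
  have hgintn : Integrable (fun y => u (x + ε * y)) μn :=
    integrable_of_bdd hgc.aestronglyMeasurable hgb
  have hGintp : Integrable (fun y => G (u (x + ε * y))) μp :=
    integrable_of_bdd hGc.aestronglyMeasurable hGb'
  have hGintn : Integrable (fun y => G (u (x + ε * y))) μn :=
    integrable_of_bdd hGc.aestronglyMeasurable hGb'
  -- cubTerm via the pointwise identity
  have hkey : cubTerm G ε u x = fun y =>
      ε⁻¹ • (G (u (x + ε * y)) - G (u x) - L (u (x + ε * y) - u x)
        - ε • quadTerm G ε u x y) := by
    funext y
    have hpt := pointwise G hG ε hεne u x y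
    have h1 : ε • cubTerm G ε u x y
        = G (u (x + ε * y)) - G (u x) - L (u (x + ε * y) - u x) - ε • quadTerm G ε u x y := by
      rw [hpt]; abel
    rw [← h1, inv_smul_smul₀ hεne]
  have hcint : ∀ (ν : Measure ℝ), IsFiniteMeasure ν →
      Integrable (fun y => u (x + ε * y)) ν →
      Integrable (fun y => G (u (x + ε * y))) ν →
      Integrable (quadTerm G ε u x) ν → Integrable (cubTerm G ε u x) ν := by
    intro ν hνf hg hGi hq
    rw [hkey]
    have hLint : Integrable (fun y => L (u (x + ε * y) - u x)) ν :=
      L.integrable_comp (hg.sub (integrable_const _))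
    exact (((hGi.sub (integrable_const _)).sub hLint).sub (hq.smul ε)).smul ε⁻¹
  have hcintp : Integrable (cubTerm G ε u x) μp := hcint μp inferInstance hgintp hGintp hqintp
  have hcintn : Integrable (cubTerm G ε u x) μn := hcint μn inferInstance hgintn hGintn hqintn
  refine ⟨⟨hqintp, hqintn, hcintp, hcintn⟩, ?_⟩
  -- the main identity
  have hEp := expand_integral G hG ε hεne u x μp hgintp hGintp hqintp hcintp
  have hEn := expand_integral G hG ε hεne u x μn hgintn hGintn hqintn hcintn
  have htr : (μp Set.univ).toReal = (μn Set.univ).toReal := by rw [hzero]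
  show ε⁻¹ • sInt μp μn (fun y => G (u (x + ε * y))) = _
  rw [sInt, hEp, hEn, htr]
  show _ = L (ε⁻¹ • sInt μp μn fun y => u (x + ε * y)) + _ + _
  rw [sInt, sInt, sInt, _root_.map_smul, _root_.map_sub]
  simp only [smul_sub, smul_add, inv_smul_smul₀ hεne]
  abel
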